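/- Let G ⊆ K_{m,n} be a connected bipartite graph and let A ⊊ U₁ be a nonempty independent set that is not contained in any two-sided independent set of G. If the ℝ-linear span of H_A ∩ σ_G^∨ has dimension m+n−2 (i.e., H_A ∩ σ_G^∨ is a facet of σ_G^∨), then A = U₁ ∖ {u} for some vertex u ∈ U₁, and moreover H_A ∩ σ_G^∨ = {x ∈ σ_G^∨ : x_u = 0}. -/

import Mathlib

/-!
Common setup: a bipartite graph `G ⊆ K_{m,n}` is encoded by an edge relation
`E : Fin m → Fin n → Prop` (vertex set `V = Fin m ⊕ Fin n`, with `U₁` the left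
summand and `U₂` the right summand).
-/

namespace ToricBipartite

open Sum Finset

variable {m n : ℕ}

/-- The simple graph on `Fin m ⊕ Fin n` determined by the bipartite edge relation `E`. -/
def toGraph (E : Fin m → Fin n → Prop) : SimpleGraph (Fin m ⊕ Fin n) where
  Adj u v :=
    (∃ i j, u = inl i ∧ v = inr j ∧ E i j) ∨ (∃ i j, u = inr j ∧ v = inl i ∧ E i j)
  symm := by
    refine ⟨?_⟩
    rintro u v (⟨i, j, hu, hv, h⟩ | ⟨i, j, hu, hv, h⟩)
    · exact Or.inr ⟨i, j, hv, hu, h⟩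
    · exact Or.inl ⟨i, j, hv, hu, h⟩
  loopless := by
    refine ⟨?_⟩
    rintro u (⟨i, j, hu, hv, h⟩ | ⟨i, j, hu, hv, h⟩) <;> rw [hu] at hv <;> simp at hv

/-- The generator `e^i + f^j` of the dual edge cone. -/
def gen (i : Fin m) (j : Fin n) : (Fin m ⊕ Fin n) → ℝ :=
  Pi.single (inl i) 1 + Pi.single (inr j) 1

/-- The set of generators `{e^i + f^j : (i, m+j) ∈ E(G)}` of the dual edge cone. -/
def genSet (E : Fin m → Fin n → Prop) : Set ((Fin m ⊕ Fin n) → ℝ) :=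
  {x | ∃ i j, E i j ∧ x = gen i j}

/-- The dual edge cone `σ_G^∨ ⊆ ℝ^{m+n}`: all nonnegative combinations of the
generators `e^i + f^j` over the edges of `G`. -/
def dualEdgeCone (E : Fin m → Fin n → Prop) : Set ((Fin m ⊕ Fin n) → ℝ) :=
  {x | ∃ c : Fin m → Fin n → ℝ, (∀ i j, 0 ≤ c i j) ∧ (∀ i j, c i j ≠ 0 → E i j) ∧
      x = ∑ i, ∑ j, c i j • gen i j}

/-- The neighbour set `N(A) ⊆ U₂` of a set `A ⊆ U₁`. -/
def nbrR (E : Fin m → Fin n → Prop) [∀ i j, Decidable (E i j)]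
    (A : Finset (Fin m)) : Finset (Fin n) :=
  univ.filter fun j => ∃ i ∈ A, E i j

/-- The neighbour set `N(B) ⊆ U₁` of a set `B ⊆ U₂`. -/
def nbrL (E : Fin m → Fin n → Prop) [∀ i j, Decidable (E i j)]
    (B : Finset (Fin n)) : Finset (Fin m) :=
  univ.filter fun i => ∃ j ∈ B, E i j

/-- `A₁ ⊔ A₂ ⊆ U₁ ⊔ U₂` contains no pair of adjacent vertices (since the graph is
bipartite this says there is no edge between `A₁` and `A₂`). -/
def IsIndepPair (E : Fin m → Fin n → Prop)
    (A₁ : Finset (Fin m)) (A₂ : Finset (Fin n)) : Prop :=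
  ∀ i ∈ A₁, ∀ j ∈ A₂, ¬ E i j

/-- A two-sided independent set `B₁ ⊔ B₂`, with `∅ ≠ B₁ ⊊ U₁` and `∅ ≠ B₂ ⊊ U₂`. -/
def TwoSidedIndep (E : Fin m → Fin n → Prop)
    (B₁ : Finset (Fin m)) (B₂ : Finset (Fin n)) : Prop :=
  B₁.Nonempty ∧ B₁ ≠ univ ∧ B₂.Nonempty ∧ B₂ ≠ univ ∧ IsIndepPair E B₁ B₂

/-- A two-sided *maximal* independent set: two-sided independent, and contained in no
strictly larger independent set of the graph. -/
def TwoSidedMaxIndep (E : Fin m → Fin n → Prop)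
    (A₁ : Finset (Fin m)) (A₂ : Finset (Fin n)) : Prop :=
  TwoSidedIndep E A₁ A₂ ∧
    ∀ B₁ B₂, IsIndepPair E B₁ B₂ → A₁ ⊆ B₁ → A₂ ⊆ B₂ → B₁ = A₁ ∧ B₂ = A₂

/-- Membership in `I_G^(*)`: either a two-sided maximal independent set, or a one-sided
independent set of the form `U_i ∖ {v}` not contained in any two-sided independent set.
A set is encoded as the pair of its parts `(A₁, A₂) = (A ∩ U₁, A ∩ U₂)`. -/
def InIStar (E : Fin m → Fin n → Prop)
    (A₁ : Finset (Fin m)) (A₂ : Finset (Fin n)) : Prop :=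
  TwoSidedMaxIndep E A₁ A₂ ∨
    (A₂ = ∅ ∧ A₁.Nonempty ∧ (∃ v, A₁ = {v}ᶜ) ∧
      ¬ ∃ B₁ B₂, TwoSidedIndep E B₁ B₂ ∧ A₁ ⊆ B₁) ∨
    (A₁ = ∅ ∧ A₂.Nonempty ∧ (∃ v, A₂ = {v}ᶜ) ∧
      ¬ ∃ B₁ B₂, TwoSidedIndep E B₁ B₂ ∧ A₂ ⊆ B₂)

/-- The edge relation of the associated (spanning) subgraph `G{A}` of `A ∈ I_G^(*)`:
for one-sided `A = A₁ ⊆ U₁` the edges of `G[A₁ ⊔ N(A₁)] ⊔ G[(U₁∖A₁) ⊔ (U₂∖N(A₁))]`,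
symmetrically for one-sided `A = A₂ ⊆ U₂`, and for two-sided `A = A₁ ⊔ A₂` the edges of
`G[A₁ ⊔ N(A₁)] ⊔ G[A₂ ⊔ N(A₂)]`. -/
def assoc (E : Fin m → Fin n → Prop) [∀ i j, Decidable (E i j)]
    (A₁ : Finset (Fin m)) (A₂ : Finset (Fin n)) : Fin m → Fin n → Prop := fun i j =>
  E i j ∧
    (if A₂ = ∅ then i ∈ A₁ ∨ j ∉ nbrR E A₁
     else if A₁ = ∅ then j ∈ A₂ ∨ i ∉ nbrL E A₂
     else i ∈ A₁ ∨ j ∈ A₂)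

instance (E : Fin m → Fin n → Prop) [∀ i j, Decidable (E i j)]
    (A₁ : Finset (Fin m)) (A₂ : Finset (Fin n)) (i : Fin m) (j : Fin n) :
    Decidable (assoc E A₁ A₂ i j) := by
  unfold assoc; infer_instance

/-- The number of connected components of the bipartite graph with edge relation `E`
(isolated vertices count as connected components). -/
noncomputable def numComponents (E : Fin m → Fin n → Prop) : ℕ :=
  Nat.card (toGraph E).ConnectedComponent

/-- `A ∈ I_G^(1)`: a first independent set, i.e. an element of `I_G^(*)` whose associated
subgraph `G{A}` has exactly two connected components. -/
def FirstIndep (E : Fin m → Fin n → Prop) [∀ i j, Decidable (E i j)]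
    (A₁ : Finset (Fin m)) (A₂ : Finset (Fin n)) : Prop :=
  InIStar E A₁ A₂ ∧ numComponents (assoc E A₁ A₂) = 2

/-- The supporting hyperplane `H_{A₁}` of a one-sided set `A₁ ⊆ U₁`:
`Σ_{v ∈ A₁} x_v = Σ_{v ∈ N(A₁)} x_v`. -/
def hyp1 (E : Fin m → Fin n → Prop) [∀ i j, Decidable (E i j)]
    (A₁ : Finset (Fin m)) : Set ((Fin m ⊕ Fin n) → ℝ) :=
  {x | ∑ i ∈ A₁, x (inl i) = ∑ j ∈ nbrR E A₁, x (inr j)}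

/-- The supporting hyperplane `H_{A₂}` of a one-sided set `A₂ ⊆ U₂`. -/
def hyp2 (E : Fin m → Fin n → Prop) [∀ i j, Decidable (E i j)]
    (A₂ : Finset (Fin n)) : Set ((Fin m ⊕ Fin n) → ℝ) :=
  {x | ∑ j ∈ A₂, x (inr j) = ∑ i ∈ nbrL E A₂, x (inl i)}

/-- The supporting hyperplane `H_A` of `A = A₁ ⊔ A₂`, taken with respect to a nonempty
one-sided part of `A`. -/
def hypA (E : Fin m → Fin n → Prop) [∀ i j, Decidable (E i j)]
    (A₁ : Finset (Fin m)) (A₂ : Finset (Fin n)) : Set ((Fin m ⊕ Fin n) → ℝ) :=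
  if A₁ = ∅ then hyp2 E A₂ else hyp1 E A₁

/-- Connectivity of the induced subgraph `G[S ⊔ T]` for `S ⊆ U₁`, `T ⊆ U₂`. -/
def InducedConnected (E : Fin m → Fin n → Prop)
    (S : Finset (Fin m)) (T : Finset (Fin n)) : Prop :=
  ((toGraph E).induce
    ((inl '' (S : Set (Fin m)) ∪ inr '' (T : Set (Fin n))) : Set (Fin m ⊕ Fin n))).Connected

/-- The degree (valency) sequence of the bipartite graph with edge relation `E`,
as a vector in `ℝ^{m+n}`. -/
def valVec (E : Fin m → Fin n → Prop) [∀ i j, Decidable (E i j)] :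
    (Fin m ⊕ Fin n) → ℝ :=
  Sum.elim (fun i => ((univ.filter fun j => E i j).card : ℝ))
    (fun j => ((univ.filter fun i => E i j).card : ℝ))


lemma coneRep_inl (c : Fin m → Fin n → ℝ) (i₀ : Fin m) :
    (∑ i, ∑ j, c i j • gen i j) (inl i₀) = ∑ j, c i₀ j := by
  simp [Finset.sum_apply, gen, Pi.single_apply, mul_ite, Finset.sum_ite_eq]

lemma coneRep_inr (c : Fin m → Fin n → ℝ) (j₀ : Fin n) :
    (∑ i, ∑ j, c i j • gen i j) (inr j₀) = ∑ i, c i j₀ := by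
  simp [Finset.sum_apply, gen, Pi.single_apply, mul_ite, Finset.sum_ite_eq]

/-- Let `A ⊊ U₁` be a nonempty (one-sided) independent set of a connected
bipartite graph `G ⊆ K_{m,n}`, not contained in any two-sided independent set. If
`H_A ∩ σ_G^∨` is a facet of `σ_G^∨` (its linear span has dimension `m + n - 2`), then
`A = U₁ ∖ {u}` for some vertex `u ∈ U₁`, and `H_A ∩ σ_G^∨ = {x ∈ σ_G^∨ : x_u = 0}`. -/
theorem facet_one_sided (m n : ℕ) (E : Fin m → Fin n → Prop)
    [∀ i j, Decidable (E i j)] (hconn : (toGraph E).Connected)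
    (A : Finset (Fin m)) (hA : A.Nonempty) (hAne : A ≠ Finset.univ)
    (hnot : ¬ ∃ B₁ B₂, TwoSidedIndep E B₁ B₂ ∧ A ⊆ B₁)
    (hfacet : Module.finrank ℝ (Submodule.span ℝ (hyp1 E A ∩ dualEdgeCone E))
      = m + n - 2) :
    ∃ u : Fin m, A = {u}ᶜ ∧
      hyp1 E A ∩ dualEdgeCone E = {x ∈ dualEdgeCone E | x (inl u) = 0} := by
  classical
  obtain ⟨a, ha⟩ := hA
  obtain ⟨b, hb⟩ : ∃ b, b ∉ A := by
    by_contra h; push_neg at h; exact hAne (Finset.eq_univ_iff_forall.mpr h)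
  have hab : a ≠ b := fun h => hb (h ▸ ha)
  have walkadj : ∀ u v : Fin m ⊕ Fin n, u ≠ v → (toGraph E).Walk u v →
      ∃ w, (toGraph E).Adj u w := by
    intro u v huv w
    cases w with
    | nil => exact absurd rfl huv
    | cons h p => exact ⟨_, h⟩
  have hdeg : ∀ i : Fin m, ∃ j, E i j := by
    intro i
    have : Nontrivial (Fin m) := ⟨a, b, hab⟩
    obtain ⟨i', hi'⟩ := exists_ne i
    obtain ⟨w⟩ := hconn.preconnected (inl i) (inl i')
    obtain ⟨v, hv⟩ := walkadj _ _ (by simpa using (hi'.symm : i ≠ i')) w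
    rcases hv with ⟨i'', j, hu, hv', hE⟩ | ⟨i'', j, hu, hv', hE⟩
    · obtain rfl : i = i'' := by simpa using hu
      exact ⟨j, hE⟩
    · simp at hu
  have hn0 : Nonempty (Fin n) := ⟨(hdeg a).choose⟩
  -- N(A) = U₂
  have hN : nbrR E A = univ := by
    by_contra hne
    obtain ⟨j, hj⟩ : ∃ j, j ∉ nbrR E A := by
      by_contra h; push_neg at h; exact hne (Finset.eq_univ_iff_forall.mpr h)
    refine hnot ⟨A, (nbrR E A)ᶜ, ⟨⟨a, ha⟩, hAne, ⟨j, Finset.mem_compl.mpr hj⟩, ?_, ?_⟩,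
      subset_rfl⟩
    · obtain ⟨j', hj'⟩ := hdeg a
      have hmem : j' ∈ nbrR E A := by
        simp only [nbrR, Finset.mem_filter, Finset.mem_univ, true_and]
        exact ⟨a, ha, hj'⟩
      intro hu
      rw [Finset.compl_eq_univ_iff] at hu
      simp [hu] at hmem
    · intro i hi j' hj' hE
      refine (Finset.mem_compl.mp hj') ?_
      simp only [nbrR, Finset.mem_filter, Finset.mem_univ, true_and]
      exact ⟨i, hi, hE⟩
  -- coefficients off A vanish for points of the facet
  have hzero : ∀ x ∈ hyp1 E A ∩ dualEdgeCone E,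
      ∀ c : Fin m → Fin n → ℝ, (∀ i j, 0 ≤ c i j) →
      x = (∑ i, ∑ j, c i j • gen i j) → ∀ i ∉ A, ∀ j, c i j = 0 := by
    rintro x ⟨hx1, _⟩ c hc0 hcx
    have heq : ∑ i ∈ A, x (inl i) = ∑ j ∈ nbrR E A, x (inr j) := hx1
    rw [hN] at heq
    have hL : ∑ i ∈ A, x (inl i) = ∑ i ∈ A, ∑ j, c i j := by
      refine Finset.sum_congr rfl fun i _ => ?_
      rw [hcx, coneRep_inl]
    have hR : ∑ j : Fin n, x (inr j) = ∑ i, ∑ j, c i j := by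
      rw [show ∑ j : Fin n, x (inr j) = ∑ j, ∑ i, c i j from
        Finset.sum_congr rfl fun j _ => by rw [hcx, coneRep_inr], Finset.sum_comm]
    have hsplit : (∑ i ∈ Aᶜ, ∑ j, c i j) + ∑ i ∈ A, ∑ j, c i j = ∑ i, ∑ j, c i j :=
      Finset.sum_compl_add_sum A _
    have hz : ∑ i ∈ Aᶜ, ∑ j, c i j = 0 := by
      rw [hL, hR] at heq; linarith
    intro i hi j
    have hrow : ∀ i' ∈ Aᶜ, ∑ j, c i' j = 0 :=
      (Finset.sum_eq_zero_iff_of_nonneg fun i' _ =>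
        Finset.sum_nonneg fun j' _ => hc0 i' j').mp hz
    exact (Finset.sum_eq_zero_iff_of_nonneg fun j' _ => hc0 i j').mp
      (hrow i (Finset.mem_compl.mpr hi)) j (Finset.mem_univ j)
  -- the linear map cutting out the span
  let φ : ((Fin m ⊕ Fin n) → ℝ) →ₗ[ℝ] ℝ :=
    (∑ i ∈ A, LinearMap.proj (inl i)) - ∑ j, LinearMap.proj (inr j)
  let F : ((Fin m ⊕ Fin n) → ℝ) →ₗ[ℝ] ((↥(Aᶜ) → ℝ) × ℝ) :=
    LinearMap.prod (LinearMap.pi fun i : ↥(Aᶜ) => LinearMap.proj (inl (i : Fin m))) φ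
  have hφ : ∀ x, φ x = (∑ i ∈ A, x (inl i)) - ∑ j, x (inr j) := by
    intro x
    simp [φ, LinearMap.sum_apply]
  have hsurj : Function.Surjective F := by
    rintro ⟨cf, t⟩
    obtain ⟨j₀⟩ := hn0
    set g : (Fin m ⊕ Fin n) → ℝ := Sum.elim (fun i => if h : i ∈ Aᶜ then cf ⟨i, h⟩ else 0)
      (fun j => if j = j₀ then -t else 0) with hg
    refine ⟨g, Prod.ext ?_ ?_⟩
    · funext i
      show g (inl (i : Fin m)) = cf i
      rw [hg]; simp only [Sum.elim_inl]; rw [dif_pos i.2]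
    · show φ g = t
      rw [hφ]
      have hz : ∑ i ∈ A, g (inl i) = 0 :=
        Finset.sum_eq_zero fun i hi => by
          rw [hg]; simp only [Sum.elim_inl]; exact dif_neg (by simpa using hi)
      have hw : ∑ j, g (inr j) = -t := by
        rw [hg]; simp [Finset.sum_ite_eq']
      rw [hz, hw]; ring
  have hker : Submodule.span ℝ (hyp1 E A ∩ dualEdgeCone E) ≤ LinearMap.ker F := by
    rw [Submodule.span_le]
    rintro x hx
    obtain ⟨hx1, hx2⟩ := hx
    obtain ⟨c, hc0, hcE, hcx⟩ := hx2
    have hz := hzero x ⟨hx1, ⟨c, hc0, hcE, hcx⟩⟩ c hc0 hcx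
    simp only [SetLike.mem_coe, LinearMap.mem_ker]
    refine Prod.ext ?_ ?_
    · funext i
      have hxz : x (inl (i : Fin m)) = 0 := by
        rw [hcx, coneRep_inl]
        exact Finset.sum_eq_zero fun j _ => hz _ (Finset.mem_compl.mp i.2) j
      simpa [F, LinearMap.pi_apply] using hxz
    · have heq : ∑ i ∈ A, x (inl i) = ∑ j ∈ nbrR E A, x (inr j) := hx1
      rw [hN] at heq
      simp only [F, LinearMap.prod_apply, Function.prod, hφ]
      rw [heq]; ring_nf; simp
  have hrk1 : Module.finrank ℝ (LinearMap.range F) + Module.finrank ℝ (LinearMap.ker F)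
      = m + n := by
    rw [LinearMap.finrank_range_add_finrank_ker F, Module.finrank_fintype_fun_eq_card,
      Fintype.card_sum, Fintype.card_fin, Fintype.card_fin]
  have hrk2 : Module.finrank ℝ (LinearMap.range F) = Aᶜ.card + 1 := by
    rw [LinearMap.range_eq_top.mpr hsurj, finrank_top, Module.finrank_prod,
      Module.finrank_fintype_fun_eq_card, Fintype.card_coe, Module.finrank_self]
  have hmono : Module.finrank ℝ (Submodule.span ℝ (hyp1 E A ∩ dualEdgeCone E))
      ≤ Module.finrank ℝ (LinearMap.ker F) := Submodule.finrank_mono hker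
  have hAc1 : 1 ≤ Aᶜ.card := Finset.card_pos.mpr ⟨b, Finset.mem_compl.mpr hb⟩
  have hcard : Aᶜ.card = 1 := by omega
  obtain ⟨u, hu⟩ := Finset.card_eq_one.mp hcard
  have hAu : A = {u}ᶜ := by rw [← hu, compl_compl]
  have hu_notA : u ∉ A := by rw [hAu]; simp
  refine ⟨u, hAu, ?_⟩
  ext x
  constructor
  · rintro ⟨hx1, hx2⟩
    refine ⟨hx2, ?_⟩
    obtain ⟨c, hc0, hcE, hcx⟩ := hx2
    have hz := hzero x ⟨hx1, ⟨c, hc0, hcE, hcx⟩⟩ c hc0 hcx u hu_notA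
    rw [hcx, coneRep_inl]
    exact Finset.sum_eq_zero fun j _ => hz j
  · rintro ⟨hx2, hx0⟩
    refine ⟨?_, hx2⟩
    obtain ⟨c, hc0, hcE, hcx⟩ := hx2
    have hcu : ∀ j, c u j = 0 := by
      have hsum : ∑ j, c u j = 0 := by rw [hcx, coneRep_inl] at hx0; exact hx0
      exact fun j => (Finset.sum_eq_zero_iff_of_nonneg fun j' _ => hc0 u j').mp hsum j
        (Finset.mem_univ j)
    show ∑ i ∈ A, x (inl i) = ∑ j ∈ nbrR E A, x (inr j)
    rw [hN]
    have hL : ∑ i ∈ A, x (inl i) = ∑ i ∈ A, ∑ j, c i j :=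
      Finset.sum_congr rfl fun i _ => by rw [hcx, coneRep_inl]
    have hR : ∑ j : Fin n, x (inr j) = ∑ i, ∑ j, c i j := by
      rw [show ∑ j : Fin n, x (inr j) = ∑ j, ∑ i, c i j from
        Finset.sum_congr rfl fun j _ => by rw [hcx, coneRep_inr], Finset.sum_comm]
    have hsplit : (∑ i ∈ A, ∑ j, c i j) + ∑ i ∈ Aᶜ, ∑ j, c i j = ∑ i, ∑ j, c i j := by
      rw [add_comm]; exact Finset.sum_compl_add_sum A _
    have hAcz : ∑ i ∈ Aᶜ, ∑ j, c i j = 0 := by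
      rw [hu]; simp [hcu]
    rw [hL, hR, ← hsplit, hAcz, add_zero]


end ToricBipartite
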